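/- arXiv:2210.06055 — 2 statements merged into one kernel-verified Lean document; each statement's English description precedes it below -/
import Mathlib

section
/- For every m ≥ 4, the quantity d_m = −∑_{d>1} 𝓕_{m−1}(d)/φ(d) satisfies 0 ≤ d_m ≤ 2^28/(2↑↑m), where φ is Euler's totient function. -/
/-- Tetration base 2: `tet 0 = 1`, `tet (m+1) = 2 ^ tet m`. -/
def tet : ℕ → ℕ
  | 0 => 1
  | m + 1 => 2 ^ tet m

/-- Height of the super-factorization tree of `n`:
`H 1 = 0` and `H n = 1 + max_{p^α ∥ n} H α` for `n > 1`. -/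
def H : ℕ → ℕ
  | n =>
    if h : n ≤ 1 then 0
    else 1 + (n.primeFactors.attach.sup fun p => H (n.factorization p.1))
decreasing_by
  exact Nat.factorization_lt _ (by omega)

/-- `f m n` = 1 if `H n ≤ m`, else 0. -/
def f (m n : ℕ) : ℤ := if H n ≤ m then 1 else 0

/-- `F m n = ∏_{p^α ∥ n} (f (m-1) α - f (m-1) (α-1))`. -/
def F (m n : ℕ) : ℤ :=
  ∏ p ∈ n.primeFactors, (f (m - 1) (n.factorization p) - f (m - 1) (n.factorization p - 1))

open Finset

/-! ### Basic facts about `tet`, `H`, `f`, `F` -/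

lemma tet_strictMono : StrictMono tet :=
  strictMono_nat_of_lt_succ fun n => by
    show tet n < 2 ^ tet n
    exact Nat.lt_two_pow_self

lemma tet_three : tet 3 = 16 := by decide

lemma H_le_of_lt_tet : ∀ n, ∀ k, n < tet (k + 1) → H n ≤ k := by
  intro n
  induction n using Nat.strong_induction_on with
  | _ n ih =>
    intro k hnk
    by_cases h1 : n ≤ 1
    · rw [H, dif_pos h1]; exact Nat.zero_le _
    · have hn0 : n ≠ 0 := by omega
      have hk : 1 ≤ k := by
        by_contra hk0
        have : k = 0 := by omega
        subst this
        simp only [tet] at hnk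
        omega
      rw [H, dif_neg h1]
      have hsup : (n.primeFactors.attach.sup fun p => H (n.factorization p.1)) ≤ k - 1 := by
        apply Finset.sup_le
        intro p _
        have hplt : n.factorization p.1 < n := Nat.factorization_lt _ hn0
        apply ih _ hplt
        have hp2 : 2 ≤ p.1 := (Nat.prime_of_mem_primeFactors p.2).two_le
        have h2a : 2 ^ n.factorization p.1 ≤ n := by
          calc 2 ^ n.factorization p.1 ≤ p.1 ^ n.factorization p.1 :=
                Nat.pow_le_pow_left hp2 _
            _ ≤ n := Nat.ordProj_le _ hn0
        have hlt : 2 ^ n.factorization p.1 < 2 ^ tet k := by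
          calc 2 ^ n.factorization p.1 ≤ n := h2a
            _ < tet (k + 1) := hnk
            _ = 2 ^ tet k := rfl
        have : n.factorization p.1 < tet k := by
          exact (Nat.pow_lt_pow_iff_right (by norm_num)).mp hlt
        rwa [Nat.sub_add_cancel hk]
      omega

lemma f_zero_or_one (μ a : ℕ) : f μ a = 0 ∨ f μ a = 1 := by
  unfold f; split <;> simp

lemma f_eq_one_of_lt_tet (μ a : ℕ) (h : a < tet (μ + 1)) : f μ a = 1 :=
  if_pos (H_le_of_lt_tet a μ h)

lemma F_one (μ : ℕ) : F μ 1 = 1 := by simp [F]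

lemma abs_F_le_one (μ d : ℕ) : |F μ d| ≤ 1 := by
  unfold F
  rw [Finset.abs_prod]
  apply Finset.prod_le_one (fun _ _ => abs_nonneg _)
  intro p _
  rcases f_zero_or_one (μ - 1) (d.factorization p) with h1 | h1 <;>
    rcases f_zero_or_one (μ - 1) (d.factorization p - 1) with h2 | h2 <;>
    rw [h1, h2] <;> norm_num

lemma F_prime_pow (μ p a : ℕ) (hp : p.Prime) (ha : a ≠ 0) :
    F μ (p ^ a) = f (μ - 1) a - f (μ - 1) (a - 1) := by
  unfold F
  rw [Nat.primeFactors_prime_pow ha hp, Finset.prod_singleton, hp.factorization_pow,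
    Finsupp.single_eq_same]

lemma F_eq_zero_of_small (μ d p : ℕ) (hμ : 1 ≤ μ) (hp : p ∈ d.primeFactors)
    (hsmall : d.factorization p < tet μ) : F μ d = 0 := by
  unfold F
  apply Finset.prod_eq_zero hp
  have h1 : f (μ - 1) (d.factorization p) = 1 := by
    apply f_eq_one_of_lt_tet
    rwa [Nat.sub_add_cancel hμ]
  have h2 : f (μ - 1) (d.factorization p - 1) = 1 := by
    apply f_eq_one_of_lt_tet
    rw [Nat.sub_add_cancel hμ]
    omega
  rw [h1, h2, sub_self]

lemma F_mul (μ : ℕ) {a b : ℕ} (ha : a ≠ 0) (hb : b ≠ 0) (hab : a.Coprime b) :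
    F μ (a * b) = F μ a * F μ b := by
  unfold F
  rw [Nat.Coprime.primeFactors_mul hab,
    Finset.prod_union (Nat.Coprime.disjoint_primeFactors hab)]
  congr 1
  · apply Finset.prod_congr rfl
    intro p hp
    have hpb : b.factorization p = 0 := by
      rw [← Finsupp.notMem_support_iff, Nat.support_factorization]
      intro hmem
      exact (Nat.Coprime.disjoint_primeFactors hab).forall_ne_finset hp hmem rfl
    rw [Nat.factorization_mul ha hb]
    simp [hpb]
  · apply Finset.prod_congr rfl
    intro p hp
    have hpa : a.factorization p = 0 := by
      rw [← Finsupp.notMem_support_iff, Nat.support_factorization]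
      intro hmem
      exact (Nat.Coprime.disjoint_primeFactors hab).forall_ne_finset hmem hp rfl
    rw [Nat.factorization_mul ha hb]
    simp [hpa]

/-! ### The arithmetic function `G` -/

noncomputable def G (μ : ℕ) : ArithmeticFunction ℝ :=
  ⟨fun d => if d = 0 then 0 else (F μ d : ℝ) / (Nat.totient d : ℝ), by simp⟩

lemma G_apply (μ d : ℕ) (hd : d ≠ 0) : G μ d = (F μ d : ℝ) / (Nat.totient d : ℝ) := by
  show (if d = 0 then _ else _) = _
  rw [if_neg hd]

lemma G_one (μ : ℕ) : G μ 1 = 1 := by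
  rw [G_apply μ 1 one_ne_zero, F_one]
  simp

lemma G_mult (μ : ℕ) : (G μ).IsMultiplicative := by
  rw [ArithmeticFunction.IsMultiplicative.iff_ne_zero]
  refine ⟨G_one μ, ?_⟩
  intro a b ha hb hab
  rw [G_apply _ _ (mul_ne_zero ha hb), G_apply _ _ ha, G_apply _ _ hb,
    F_mul μ ha hb hab, Nat.totient_mul hab]
  push_cast
  ring

/-- Sum of a multiplicative function over divisors as a product over primes. -/
lemma sum_divisors_eq_prod (Gm : ArithmeticFunction ℝ) (hG : Gm.IsMultiplicative)
    {M : ℕ} (hM : M ≠ 0) :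
    ∑ d ∈ M.divisors, Gm d =
      ∏ p ∈ M.primeFactors, ∑ a ∈ range (M.factorization p + 1), Gm (p ^ a) := by
  have h1 : ∑ d ∈ M.divisors, Gm d = (Gm * ↑ArithmeticFunction.zeta) M :=
    (ArithmeticFunction.coe_mul_zeta_apply).symm
  rw [h1, (hG.mul ArithmeticFunction.isMultiplicative_zeta.natCast).multiplicative_factorization
    _ hM]
  rw [Finsupp.prod, Nat.support_factorization]
  apply Finset.prod_congr rfl
  intro p hp
  rw [ArithmeticFunction.coe_mul_zeta_apply,
    Nat.sum_divisors_prime_pow (Nat.prime_of_mem_primeFactors hp)]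

/-! ### Bounds on prime-power sums of `G` -/

lemma G_pp_bounds (μ : ℕ) (hμ : 1 ≤ μ) {p : ℕ} (hp : p.Prime) (K : ℕ) :
    0 ≤ ∑ a ∈ range (K + 1), G μ (p ^ a) ∧ ∑ a ∈ range (K + 1), G μ (p ^ a) ≤ 1 := by
  set w : ℕ → ℝ := fun a => 1 / (Nat.totient (p ^ a) : ℝ) with hw
  set fr : ℕ → ℝ := fun a => ((f (μ - 1) a : ℤ) : ℝ) with hfr
  have hppos : ∀ a : ℕ, (0:ℕ) < p ^ a := fun a => pow_pos hp.pos a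
  have htpos : ∀ a : ℕ, 0 < (Nat.totient (p ^ a) : ℝ) := by
    intro a
    exact_mod_cast Nat.totient_pos.mpr (hppos a)
  have hwpos : ∀ a, 0 < w a := fun a => one_div_pos.mpr (htpos a)
  have hw0 : w 0 = 1 := by simp [hw]
  have hwmono : ∀ a, w (a + 1) ≤ w a := by
    intro a
    apply one_div_le_one_div_of_le (htpos a)
    exact_mod_cast Nat.le_of_dvd (Nat.totient_pos.mpr (hppos (a+1)))
      (Nat.totient_dvd_of_dvd (pow_dvd_pow p (Nat.le_succ a)))
  have hfr01 : ∀ a, fr a = 0 ∨ fr a = 1 := by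
    intro a
    rcases f_zero_or_one (μ - 1) a with h | h <;> simp [hfr, h]
  have hfr0 : fr 0 = 1 := by
    have : f (μ - 1) 0 = 1 := by
      unfold f
      rw [if_pos]
      rw [H, dif_pos (by norm_num)]
      exact Nat.zero_le _
    simp [hfr, this]
  have hG0 : G μ (p ^ 0) = 1 := by rw [pow_zero]; exact G_one μ
  have hGa : ∀ a : ℕ, G μ (p ^ (a + 1)) = (fr (a + 1) - fr a) * w (a + 1) := by
    intro a
    rw [G_apply _ _ (Nat.pos_iff_ne_zero.mp (hppos (a+1))),
      F_prime_pow μ p (a+1) hp (Nat.succ_ne_zero a)]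
    simp only [Nat.add_sub_cancel]
    rw [hfr]
    push_cast
    simp only [hw]
    ring
  have main : ∀ K : ℕ,
      0 ≤ (∑ a ∈ range (K + 1), G μ (p ^ a)) - fr K * w K ∧
      (∑ a ∈ range (K + 1), G μ (p ^ a)) - fr K * w K ≤ 1 - w K := by
    intro K
    induction K with
    | zero =>
      rw [Finset.sum_range_one, hG0, hfr0, hw0]
      norm_num
    | succ K ihK =>
      rw [Finset.sum_range_succ, hGa K]
      have h01 : 0 ≤ fr K ∧ fr K ≤ 1 := by
        rcases hfr01 K with h | h <;> rw [h] <;> norm_num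
      have hmono := hwmono K
      constructor
      · nlinarith [ihK.1, h01.1, h01.2, hwpos (K+1)]
      · nlinarith [ihK.2, h01.1, h01.2, hwpos (K+1)]
  have h01 : 0 ≤ fr K ∧ fr K ≤ 1 := by
    rcases hfr01 K with h | h <;> rw [h] <;> norm_num
  constructor
  · nlinarith [(main K).1, h01.1, (hwpos K)]
  · nlinarith [(main K).2, h01.1, h01.2, (hwpos K)]

lemma sum_divisors_G_bounds (μ : ℕ) (hμ : 1 ≤ μ) {M : ℕ} (hM : M ≠ 0) :
    0 ≤ ∑ d ∈ M.divisors, G μ d ∧ ∑ d ∈ M.divisors, G μ d ≤ 1 := by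
  rw [sum_divisors_eq_prod (G μ) (G_mult μ) hM]
  constructor
  · apply Finset.prod_nonneg
    intro p hp
    exact (G_pp_bounds μ hμ (Nat.prime_of_mem_primeFactors hp) _).1
  · apply Finset.prod_le_one
    · intro p hp
      exact (G_pp_bounds μ hμ (Nat.prime_of_mem_primeFactors hp) _).1
    · intro p hp
      exact (G_pp_bounds μ hμ (Nat.prime_of_mem_primeFactors hp) _).2

/-! ### The reciprocal arithmetic function and divisor-sum bound -/

noncomputable def recip : ArithmeticFunction ℝ :=
  ⟨fun d => if d = 0 then 0 else 1 / (d : ℝ), by simp⟩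

lemma recip_apply (d : ℕ) (hd : d ≠ 0) : recip d = 1 / (d : ℝ) := by
  show (if d = 0 then _ else _) = _
  rw [if_neg hd]

lemma recip_mult : recip.IsMultiplicative := by
  rw [ArithmeticFunction.IsMultiplicative.iff_ne_zero]
  constructor
  · rw [recip_apply 1 one_ne_zero]; norm_num
  · intro a b ha hb _
    rw [recip_apply _ (mul_ne_zero ha hb), recip_apply _ ha, recip_apply _ hb]
    push_cast
    ring

lemma sum_recip_divisors_le {M : ℕ} (hM : M ≠ 0) :
    ∑ d ∈ M.divisors, recip d ≤ ∏ p ∈ M.primeFactors, (p : ℝ) := by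
  rw [sum_divisors_eq_prod recip recip_mult hM]
  apply Finset.prod_le_prod
  · intro p hp
    apply Finset.sum_nonneg
    intro a _
    rw [recip_apply _ (Nat.pos_iff_ne_zero.mp (pow_pos
      (Nat.prime_of_mem_primeFactors hp).pos a))]
    positivity
  · intro p hp
    have hp' := Nat.prime_of_mem_primeFactors hp
    have hp2 : (2:ℝ) ≤ (p:ℝ) := by exact_mod_cast hp'.two_le
    have : ∀ a ∈ range (M.factorization p + 1), recip (p ^ a) ≤ (1/2 : ℝ) ^ a := by
      intro a _
      rw [recip_apply _ (Nat.pos_iff_ne_zero.mp (pow_pos hp'.pos a))]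
      rw [div_pow, one_pow]
      apply one_div_le_one_div_of_le (by positivity)
      push_cast
      exact pow_le_pow_left₀ (by norm_num) hp2 a
    calc ∑ a ∈ range (M.factorization p + 1), recip (p ^ a)
        ≤ ∑ a ∈ range (M.factorization p + 1), (1/2:ℝ) ^ a := Finset.sum_le_sum this
      _ ≤ 2 := sum_geometric_two_le _
      _ ≤ (p:ℝ) := hp2

/-! ### Structure of `T`-full numbers -/

def radd (d : ℕ) : ℕ := ∏ p ∈ d.primeFactors, p

noncomputable def ψ (T d : ℕ) : ℕ := d.factorization.prod fun p a => p ^ (a - (T - 1))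

lemma radd_pos {d : ℕ} : 0 < radd d :=
  Finset.prod_pos fun p hp => (Nat.prime_of_mem_primeFactors hp).pos

lemma two_le_radd {d : ℕ} (hd : 2 ≤ d) : 2 ≤ radd d := by
  obtain ⟨p, hp⟩ := Nat.nonempty_primeFactors.mpr (by omega : 1 < d)
  calc 2 ≤ p := (Nat.prime_of_mem_primeFactors hp).two_le
    _ ≤ radd d := Finset.single_le_prod' (fun q hq =>
        (Nat.prime_of_mem_primeFactors hq).one_lt.le) hp

lemma le_radd_mul_totient (n : ℕ) : n ≤ radd n * n.totient := by
  have e := Nat.totient_mul_prod_primeFactors n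
  have h1 : 1 ≤ ∏ p ∈ n.primeFactors, (p - 1) :=
    Finset.one_le_prod' fun p hp => by
      have := (Nat.prime_of_mem_primeFactors hp).two_le; omega
  calc n = n * 1 := (mul_one n).symm
    _ ≤ n * ∏ p ∈ n.primeFactors, (p - 1) := Nat.mul_le_mul_left n h1
    _ = n.totient * ∏ p ∈ n.primeFactors, p := e.symm
    _ = radd n * n.totient := by rw [radd]; ring

lemma psi_props (T d : ℕ) (hT : 2 ≤ T) (hd : 2 ≤ d)
    (hfull : ∀ p ∈ d.primeFactors, T ≤ d.factorization p) :
    2 ≤ ψ T d ∧ (ψ T d).primeFactors = d.primeFactors ∧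
      d = ψ T d * (radd (ψ T d)) ^ (T - 1) ∧
      (Nat.totient d : ℝ) = ((radd (ψ T d) : ℝ)) ^ (T - 1) * (Nat.totient (ψ T d) : ℝ) := by
  classical
  have hd0 : d ≠ 0 := by omega
  set P := d.primeFactors with hPdef
  have hprod : ψ T d = ∏ p ∈ P, p ^ (d.factorization p - (T - 1)) := by
    rw [ψ, Finsupp.prod, Nat.support_factorization]
  have hb1 : ∀ p ∈ P, 1 ≤ d.factorization p - (T - 1) := by
    intro p hp; have := hfull p hp; omega
  have hn0 : ψ T d ≠ 0 := by
    rw [hprod]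
    exact Finset.prod_ne_zero_iff.mpr fun p hp =>
      pow_ne_zero _ (Nat.prime_of_mem_primeFactors hp).pos.ne'
  have hfact : ∀ q, (ψ T d).factorization q =
      if q ∈ P then d.factorization q - (T - 1) else 0 := by
    intro q
    have h1 : (ψ T d).factorization =
        ∑ p ∈ P, Finsupp.single p (d.factorization p - (T - 1)) := by
      rw [hprod, Nat.factorization_prod fun p hp =>
        pow_ne_zero _ (Nat.prime_of_mem_primeFactors hp).pos.ne']
      exact Finset.sum_congr rfl fun p hp =>
        (Nat.prime_of_mem_primeFactors hp).factorization_pow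
    rw [h1, Finset.sum_apply']
    simp only [Finsupp.single_apply]
    rw [Finset.sum_ite_eq' P q (fun p => d.factorization p - (T - 1))]
  have hsupp : (ψ T d).primeFactors = P := by
    ext q
    rw [← Nat.support_factorization, Finsupp.mem_support_iff, hfact q]
    split
    · rename_i hq
      have := hb1 q hq
      constructor
      · intro _; exact hq
      · intro _; omega
    · rename_i hq
      simp only [ne_eq, not_true_eq_false, iff_false]
      tauto
  have hraddn : radd (ψ T d) = ∏ p ∈ P, p := by rw [radd, hsupp]
  have h2n : 2 ≤ ψ T d := by
    obtain ⟨p, hp⟩ := Nat.nonempty_primeFactors.mpr (by omega : 1 < d)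
    have hple : p ≤ p ^ (d.factorization p - (T - 1)) :=
      Nat.le_self_pow (by have := hb1 p hp; omega) p
    calc 2 ≤ p := (Nat.prime_of_mem_primeFactors hp).two_le
      _ ≤ p ^ (d.factorization p - (T - 1)) := hple
      _ ≤ ψ T d := by
          rw [hprod]
          exact Finset.single_le_prod' (f := fun q => q ^ (d.factorization q - (T - 1)))
            (fun q hq => Nat.one_le_pow _ _ (Nat.prime_of_mem_primeFactors hq).pos) hp
  have hdeq : d = ψ T d * (radd (ψ T d)) ^ (T - 1) := by
    rw [hraddn, hprod, ← Finset.prod_pow, ← Finset.prod_mul_distrib]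
    have : ∀ p ∈ P, p ^ (d.factorization p - (T - 1)) * p ^ (T - 1)
        = p ^ (d.factorization p) := by
      intro p hp
      rw [← pow_add]
      congr 1
      have := hfull p hp; omega
    rw [Finset.prod_congr rfl this]
    conv_lhs => rw [← Nat.factorization_prod_pow_eq_self hd0]
    rw [Finsupp.prod, Nat.support_factorization]
  -- totient identity
  have e1 := Nat.totient_mul_prod_primeFactors d
  have e2 := Nat.totient_mul_prod_primeFactors (ψ T d)
  rw [hsupp] at e2
  have hPpos : 0 < ∏ p ∈ P, p :=
    Finset.prod_pos fun p hp => (Nat.prime_of_mem_primeFactors hp).pos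
  have hkey : d.totient * ψ T d = d * (ψ T d).totient := by
    have h3 : d.totient * ψ T d * ∏ p ∈ P, p = d * (ψ T d).totient * ∏ p ∈ P, p := by
      calc d.totient * ψ T d * ∏ p ∈ P, p = ψ T d * (d.totient * ∏ p ∈ P, p) := by ring
        _ = ψ T d * (d * ∏ p ∈ P, (p - 1)) := by rw [e1]
        _ = d * (ψ T d * ∏ p ∈ P, (p - 1)) := by ring
        _ = d * ((ψ T d).totient * ∏ p ∈ P, p) := by rw [← e2]
        _ = d * (ψ T d).totient * ∏ p ∈ P, p := by ring
    exact Nat.eq_of_mul_eq_mul_right hPpos h3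
  refine ⟨h2n, hsupp, hdeq, ?_⟩
  -- now the real-valued identity
  have hnR : (0:ℝ) < (ψ T d : ℝ) := by exact_mod_cast (by omega : 0 < ψ T d)
  have hkeyR : (d.totient : ℝ) * (ψ T d : ℝ) = (d : ℝ) * ((ψ T d).totient : ℝ) := by
    exact_mod_cast hkey
  have hdR : (d : ℝ) = (ψ T d : ℝ) * ((radd (ψ T d) : ℝ)) ^ (T - 1) := by
    exact_mod_cast hdeq
  have h4 : (d.totient : ℝ) * (ψ T d : ℝ)
      = ((radd (ψ T d) : ℝ) ^ (T - 1) * ((ψ T d).totient : ℝ)) * (ψ T d : ℝ) := by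
    rw [hkeyR, hdR]; ring
  exact mul_right_cancel₀ (ne_of_gt hnR) h4

lemma sum_inv_sq_le (R : Finset ℕ) (hR : ∀ r ∈ R, 2 ≤ r) :
    ∑ r ∈ R, (1 / (r : ℝ) ^ 2) ≤ 1 := by
  classical
  have hIcc : ∀ N : ℕ, 1 ≤ N → ∑ r ∈ Finset.Icc 2 N, (1 / (r : ℝ) ^ 2) ≤ 1 - 1 / (N : ℝ) := by
    intro N
    induction N with
    | zero => intro h; omega
    | succ N ih =>
      intro _
      rcases Nat.eq_zero_or_pos N with h | h
      · subst h
        rw [Finset.Icc_eq_empty (by omega)]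
        norm_num
      · have hN1 : 1 ≤ N := h
        rw [Finset.sum_Icc_succ_top (by omega : 2 ≤ N + 1)]
        have hNpos : (0:ℝ) < N := by exact_mod_cast hN1
        have hN1pos : (0:ℝ) < (N:ℝ) + 1 := by positivity
        have key : 1 / ((N:ℝ) + 1) ^ 2 ≤ 1 / N - 1 / (N + 1) := by
          rw [div_sub_div _ _ (ne_of_gt hNpos) (ne_of_gt hN1pos)]
          rw [div_le_div_iff₀ (by positivity) (by positivity)]
          ring_nf
          nlinarith
        push_cast
        linarith [ih hN1, key]
  rcases R.eq_empty_or_nonempty with rfl | hne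
  · simp
  · have hsub : R ⊆ Finset.Icc 2 (R.sup id) := by
      intro r hr
      rw [Finset.mem_Icc]
      exact ⟨hR r hr, Finset.le_sup (f := id) hr⟩
    have h2 : 1 ≤ R.sup id := by
      obtain ⟨r, hr⟩ := hne
      calc 1 ≤ r := by have := hR r hr; omega
        _ ≤ R.sup id := Finset.le_sup (f := id) hr
    have h3 := hIcc (R.sup id) h2
    have h4 : ∑ r ∈ R, (1 / (r : ℝ) ^ 2) ≤ ∑ r ∈ Finset.Icc 2 (R.sup id), (1 / (r : ℝ) ^ 2) :=
      Finset.sum_le_sum_of_subset_of_nonneg hsub (fun r _ _ => by positivity)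
    have h5 : (0:ℝ) ≤ 1 / (Nat.cast (R.sup id) : ℝ) := by positivity
    linarith

lemma sum_u_le (B : Finset ℕ) (hB : ∀ n ∈ B, 2 ≤ n) :
    ∑ n ∈ B, 1 / ((radd n : ℝ) ^ 11 * n) ≤ 1 := by
  classical
  set L := B.sup id with hL
  rw [← Finset.sum_fiberwise_of_maps_to (g := radd) (t := B.image radd)
    (fun n hn => Finset.mem_image_of_mem _ hn) (fun n => 1 / ((radd n : ℝ) ^ 11 * n))]
  have hinner : ∀ r ∈ B.image radd,
      ∑ n ∈ B.filter (fun n => radd n = r), 1 / ((radd n : ℝ) ^ 11 * n) ≤ 1 / (r : ℝ) ^ 2 := by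
    intro r hr
    obtain ⟨n₀, hn₀, hrn₀⟩ := Finset.mem_image.mp hr
    have hr2 : 2 ≤ r := hrn₀ ▸ two_le_radd (hB n₀ hn₀)
    have hL2 : 2 ≤ L := le_trans (hB n₀ hn₀) (Finset.le_sup (f := id) hn₀)
    have hrL0 : r ^ L ≠ 0 := pow_ne_zero _ (by omega)
    -- each n in the fiber divides r ^ L
    have hdvd : ∀ n ∈ B.filter (fun n => radd n = r), n ∣ r ^ L := by
      intro n hn
      rw [Finset.mem_filter] at hn
      obtain ⟨hnB, hnr⟩ := hn
      have hn2 := hB n hnB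
      have hn0 : n ≠ 0 := by omega
      rw [← Nat.factorization_le_iff_dvd hn0 hrL0]
      rw [Finsupp.le_iff]
      intro q hq
      rw [Nat.support_factorization] at hq
      have hqprime := Nat.prime_of_mem_primeFactors hq
      have hqr : q ∣ r := by
        rw [← hnr, radd]
        exact Finset.dvd_prod_of_mem _ hq
      have hrpos : 1 ≤ r.factorization q :=
        hqprime.factorization_pos_of_dvd (by omega) hqr
      have h1 : n.factorization q < n := Nat.factorization_lt _ hn0
      have h2 : n ≤ L := Finset.le_sup (f := id) hnB
      rw [Nat.factorization_pow]
      have : n.factorization q ≤ L := by omega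
      calc n.factorization q ≤ L * 1 := by omega
        _ ≤ L * r.factorization q := Nat.mul_le_mul_left L hrpos
      
    have hsub : B.filter (fun n => radd n = r) ⊆ (r ^ L).divisors := by
      intro n hn
      rw [Nat.mem_divisors]
      exact ⟨hdvd n hn, hrL0⟩
    -- primeFactors of r ^ L
    have hradr : ∏ p ∈ (r ^ L).primeFactors, p = r := by
      rw [Nat.primeFactors_pow _ (by omega : L ≠ 0)]
      rw [← hrn₀, radd, Nat.primeFactors_prod
        (fun p hp => Nat.prime_of_mem_primeFactors hp)]
    have step1 : ∑ n ∈ B.filter (fun n => radd n = r), 1 / ((radd n : ℝ) ^ 11 * n)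
        = (1 / (r:ℝ) ^ 11) * ∑ n ∈ B.filter (fun n => radd n = r), recip n := by
      rw [Finset.mul_sum]
      apply Finset.sum_congr rfl
      intro n hn
      rw [Finset.mem_filter] at hn
      have hn0 : n ≠ 0 := by have := hB n hn.1; omega
      rw [hn.2, recip_apply n hn0, one_div_mul_one_div]
    rw [step1]
    have step2 : ∑ n ∈ B.filter (fun n => radd n = r), recip n
        ≤ ∑ d ∈ (r ^ L).divisors, recip d := by
      apply Finset.sum_le_sum_of_subset_of_nonneg hsub
      intro d hd _
      rw [recip_apply d (Nat.pos_of_mem_divisors hd).ne']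
      positivity
    have step3 : ∑ d ∈ (r ^ L).divisors, recip d ≤ (r : ℝ) := by
      calc ∑ d ∈ (r ^ L).divisors, recip d
          ≤ ∏ p ∈ (r ^ L).primeFactors, (p : ℝ) := sum_recip_divisors_le hrL0
        _ = (r : ℝ) := by rw [← Nat.cast_prod]; exact_mod_cast hradr
    have hr2R : (2:ℝ) ≤ (r:ℝ) := by exact_mod_cast hr2
    calc (1 / (r:ℝ) ^ 11) * ∑ n ∈ B.filter (fun n => radd n = r), recip n
        ≤ (1 / (r:ℝ) ^ 11) * r := by
          apply mul_le_mul_of_nonneg_left (le_trans step2 step3) (by positivity)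
      _ = 1 / (r:ℝ) ^ 10 := by
          have hr0 : (r:ℝ) ≠ 0 := by exact_mod_cast (by omega : r ≠ 0)
          field_simp
      _ ≤ 1 / (r:ℝ) ^ 2 := by
          apply one_div_le_one_div_of_le (by positivity)
          apply pow_le_pow_right₀ (by linarith) (by norm_num)
  calc ∑ r ∈ B.image radd, ∑ n ∈ B.filter (fun n => radd n = r), 1 / ((radd n : ℝ) ^ 11 * n)
      ≤ ∑ r ∈ B.image radd, 1 / (r : ℝ) ^ 2 := Finset.sum_le_sum hinner
    _ ≤ 1 := sum_inv_sq_le _ (fun r hr => by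
        obtain ⟨n₀, hn₀, hrn₀⟩ := Finset.mem_image.mp hr
        exact hrn₀ ▸ two_le_radd (hB n₀ hn₀))

lemma key_sum (T : ℕ) (hT : 16 ≤ T) (A : Finset ℕ)
    (hA : ∀ d ∈ A, 2 ≤ d ∧ ∀ p ∈ d.primeFactors, T ≤ d.factorization p) :
    ∑ d ∈ A, (1 / (Nat.totient d : ℝ)) ≤ 2 ^ 14 / 2 ^ T := by
  classical
  have hT2 : 2 ≤ T := by omega
  have hinj : ∀ d1 ∈ A, ∀ d2 ∈ A, ψ T d1 = ψ T d2 → d1 = d2 := by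
    intro d1 h1 d2 h2 he
    obtain ⟨_, _, hd1, _⟩ := psi_props T d1 hT2 (hA d1 h1).1 (hA d1 h1).2
    obtain ⟨_, _, hd2, _⟩ := psi_props T d2 hT2 (hA d2 h2).1 (hA d2 h2).2
    rw [hd1, hd2, he]
  have himg : ∑ d ∈ A, (1 / (Nat.totient d : ℝ))
      = ∑ n ∈ A.image (ψ T), 1 / ((radd n : ℝ) ^ (T-1) * (Nat.totient n : ℝ)) := by
    rw [Finset.sum_image hinj]
    apply Finset.sum_congr rfl
    intro d hd
    obtain ⟨_, _, _, htot⟩ := psi_props T d hT2 (hA d hd).1 (hA d hd).2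
    rw [htot]
  rw [himg]
  set B := A.image (ψ T) with hB
  have hBn : ∀ n ∈ B, 2 ≤ n := by
    intro n hn
    obtain ⟨d, hd, rfl⟩ := Finset.mem_image.mp hn
    exact (psi_props T d hT2 (hA d hd).1 (hA d hd).2).1
  have hpt : ∀ n ∈ B, 1 / ((radd n : ℝ) ^ (T-1) * (Nat.totient n : ℝ))
      ≤ (2:ℝ) ^ 14 / 2 ^ T * (1 / ((radd n : ℝ) ^ 11 * n)) := by
    intro n hn
    have hn2 := hBn n hn
    have hn0 : n ≠ 0 := by omega
    have hr2 : (2:ℝ) ≤ (radd n : ℝ) := by exact_mod_cast two_le_radd hn2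
    have hrpos : (0:ℝ) < (radd n : ℝ) := by linarith
    have hφpos : (0:ℝ) < (Nat.totient n : ℝ) := by
      exact_mod_cast Nat.totient_pos.mpr (by omega : 0 < n)
    have hnpos : (0:ℝ) < (n:ℝ) := by exact_mod_cast (by omega : 0 < n)
    have hle : (n : ℝ) ≤ (radd n : ℝ) * (Nat.totient n : ℝ) := by
      exact_mod_cast le_radd_mul_totient n
    have hexp : T - 1 = (T - 13) + 11 + 1 := by omega
    have hkey : (2:ℝ) ^ (T-13) * ((radd n : ℝ) ^ 11 * n)
        ≤ (radd n : ℝ) ^ (T-1) * (Nat.totient n : ℝ) := by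
      rw [hexp, pow_add, pow_add, pow_one]
      calc (2:ℝ) ^ (T-13) * ((radd n : ℝ) ^ 11 * n)
          ≤ (radd n : ℝ) ^ (T-13) * ((radd n : ℝ) ^ 11 *
              ((radd n : ℝ) * (Nat.totient n : ℝ))) := by
            apply mul_le_mul
            · exact pow_le_pow_left₀ (by norm_num) hr2 _
            · exact mul_le_mul_of_nonneg_left hle (by positivity)
            · positivity
            · positivity
        _ = (radd n : ℝ) ^ (T-13) * (radd n : ℝ) ^ 11 * (radd n : ℝ)
              * (Nat.totient n : ℝ) := by ring
    have h2T : (2:ℝ) ^ (T-13) * 2 ^ 13 = 2 ^ T := by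
      rw [← pow_add]; congr 1; omega
    have lhspos : (0:ℝ) < (radd n : ℝ) ^ (T-1) * (Nat.totient n : ℝ) := by positivity
    have rhspos : (0:ℝ) < (2:ℝ) ^ (T-13) * ((radd n : ℝ) ^ 11 * n) := by positivity
    have step : 1 / ((radd n : ℝ) ^ (T-1) * (Nat.totient n : ℝ))
        ≤ 1 / ((2:ℝ) ^ (T-13) * ((radd n : ℝ) ^ 11 * n)) :=
      one_div_le_one_div_of_le rhspos hkey
    apply le_trans step
    rw [div_mul_div_comm, mul_one]
    rw [div_le_div_iff₀ (by positivity) (by positivity)]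
    calc (1:ℝ) * (2 ^ T * ((radd n : ℝ) ^ 11 * n))
        = (2:ℝ) ^ (T-13) * 2^13 * ((radd n : ℝ) ^ 11 * n) := by rw [← h2T]; ring
      _ ≤ (2:ℝ) ^ 14 * ((2:ℝ) ^ (T-13) * ((radd n : ℝ) ^ 11 * (n:ℝ))) := by
          nlinarith [rhspos]
  calc ∑ n ∈ B, 1 / ((radd n : ℝ) ^ (T-1) * (Nat.totient n : ℝ))
      ≤ ∑ n ∈ B, (2:ℝ) ^ 14 / 2 ^ T * (1 / ((radd n : ℝ) ^ 11 * n)) :=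
        Finset.sum_le_sum hpt
    _ = (2:ℝ) ^ 14 / 2 ^ T * ∑ n ∈ B, 1 / ((radd n : ℝ) ^ 11 * n) := by
        rw [Finset.mul_sum]
    _ ≤ (2:ℝ) ^ 14 / 2 ^ T * 1 := by
        apply mul_le_mul_of_nonneg_left (sum_u_le B hBn) (by positivity)
    _ = 2 ^ 14 / 2 ^ T := mul_one _

theorem stmt15 (m : ℕ) (hm : 4 ≤ m) :
    Summable (fun d : {d : ℕ // 1 < d} =>
      |(F (m - 1) (d : ℕ) : ℝ) / (Nat.totient (d : ℕ) : ℝ)|) ∧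
    0 ≤ -∑' d : {d : ℕ // 1 < d}, (F (m - 1) (d : ℕ) : ℝ) / (Nat.totient (d : ℕ) : ℝ) ∧
    -∑' d : {d : ℕ // 1 < d}, (F (m - 1) (d : ℕ) : ℝ) / (Nat.totient (d : ℕ) : ℝ)
      ≤ 2 ^ 28 / tet m := by
  classical
  set μ := m - 1 with hμdef
  have hμ1 : 1 ≤ μ := by omega
  have hμ3 : 3 ≤ μ := by omega
  set T := tet μ with hTdef
  have hT16 : 16 ≤ T := by
    calc 16 = tet 3 := tet_three.symm
      _ ≤ tet μ := tet_strictMono.monotone hμ3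
  have htetm : tet m = 2 ^ T := by
    have hm1 : m = μ + 1 := by omega
    rw [hm1]
    rfl
  set g0 : ℕ → ℝ := fun d => (F μ d : ℝ) / (Nat.totient d : ℝ) with hg0
  set I : ℕ → ℝ := fun d => Set.indicator {d : ℕ | 1 < d} g0 d with hIdef
  have hIG : ∀ d, 1 < d → I d = G μ d := by
    intro d hd
    rw [hIdef]
    simp only [Set.indicator_apply, Set.mem_setOf_eq, if_pos hd]
    rw [G_apply μ d (by omega)]
  have hI0 : ∀ d, ¬ 1 < d → I d = 0 := by
    intro d hd
    rw [hIdef]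
    simp only [Set.indicator_apply, Set.mem_setOf_eq, if_neg hd]
  have hIg0 : ∀ d, 1 < d → I d = g0 d := by
    intro d hd
    rw [hIdef]
    exact Set.indicator_of_mem hd g0
  -- finite-sum bound on |I|
  have hfin : ∀ A : Finset ℕ, ∑ d ∈ A, |I d| ≤ 2 ^ 14 / 2 ^ T := by
    intro A
    have h1 : ∑ d ∈ A, |I d|
        ≤ ∑ d ∈ A.filter (fun d => 1 < d ∧ F μ d ≠ 0), (1 / (Nat.totient d : ℝ)) := by
      rw [← Finset.sum_filter_add_sum_filter_not A (fun d => 1 < d ∧ F μ d ≠ 0) (fun d => |I d|)]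
      have hz : ∑ d ∈ A.filter (fun d => ¬(1 < d ∧ F μ d ≠ 0)), |I d| = 0 := by
        apply Finset.sum_eq_zero
        intro d hd
        rw [Finset.mem_filter] at hd
        by_cases hd1 : 1 < d
        · have hF : F μ d = 0 := by tauto
          rw [hIG d hd1, G_apply μ d (by omega), hF]
          simp
        · rw [hI0 d hd1]
          simp
      rw [hz, add_zero]
      apply Finset.sum_le_sum
      intro d hd
      rw [Finset.mem_filter] at hd
      obtain ⟨-, hd1, -⟩ := hd
      rw [hIG d hd1, G_apply μ d (by omega)]
      rw [abs_div]
      have hφpos : (0:ℝ) < (Nat.totient d : ℝ) := by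
        exact_mod_cast Nat.totient_pos.mpr (by omega : 0 < d)
      rw [abs_of_pos hφpos]
      have hFle : |(F μ d : ℝ)| ≤ 1 := by exact_mod_cast abs_F_le_one μ d
      gcongr
    apply le_trans h1
    apply key_sum T hT16
    intro d hd
    rw [Finset.mem_filter] at hd
    obtain ⟨-, hd1, hdF⟩ := hd
    refine ⟨by omega, ?_⟩
    intro p hp
    by_contra hlt
    exact hdF (F_eq_zero_of_small μ d p hμ1 hp (by omega))
  have habs_nonneg : ∀ d : ℕ, 0 ≤ |I d| := fun d => abs_nonneg _
  have hsumabs : Summable (fun d => |I d|) :=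
    summable_of_sum_range_le habs_nonneg (fun n => hfin (Finset.range n))
  have htsumabs : ∑' d, |I d| ≤ 2 ^ 14 / 2 ^ T :=
    Real.tsum_le_of_sum_range_le habs_nonneg (fun n => hfin (Finset.range n))
  have hsumI : Summable I := Summable.of_abs hsumabs
  have heq : (∑' d : {d : ℕ // 1 < d}, g0 (d : ℕ)) = ∑' d : ℕ, I d :=
    tsum_subtype {d : ℕ | 1 < d} g0
  -- the tsum is ≤ 0
  have hle0 : ∑' d : ℕ, I d ≤ 0 := by
    set s : ℕ → Finset ℕ := fun N => insert 0 (Nat.divisors (Nat.factorial (N + 1))) with hs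
    have hmono : Monotone s := by
      intro a b hab
      apply Finset.insert_subset_insert
      exact Nat.divisors_subset_of_dvd (Nat.factorial_ne_zero _)
        (Nat.factorial_dvd_factorial (by omega))
    have hcover : ∀ i : ℕ, ∃ N, i ∈ s N := by
      intro i
      rcases Nat.eq_zero_or_pos i with rfl | hi
      · exact ⟨0, Finset.mem_insert_self _ _⟩
      · refine ⟨i, Finset.mem_insert_of_mem ?_⟩
        rw [Nat.mem_divisors]
        exact ⟨Nat.dvd_factorial hi (by omega), Nat.factorial_ne_zero _⟩
    have htends : Filter.Tendsto s Filter.atTop Filter.atTop :=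
      Filter.tendsto_atTop_finset_of_monotone hmono hcover
    have hhs : Filter.Tendsto (fun A : Finset ℕ => ∑ d ∈ A, I d) Filter.atTop
        (nhds (∑' d, I d)) := hsumI.hasSum
    have hlim := hhs.comp htends
    apply le_of_tendsto hlim
    apply Filter.Eventually.of_forall
    intro N
    show ∑ d ∈ insert 0 (Nat.divisors (Nat.factorial (N + 1))), I d ≤ 0
    have h0 : (0:ℕ) ∉ Nat.divisors (Nat.factorial (N + 1)) := by
      simp [Nat.mem_divisors]
    rw [Finset.sum_insert h0, hI0 0 (by omega), zero_add]
    have hMne : Nat.factorial (N + 1) ≠ 0 := Nat.factorial_ne_zero _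
    have h1mem : 1 ∈ Nat.divisors (Nat.factorial (N + 1)) := Nat.one_mem_divisors.mpr hMne
    have hsplit : ∑ d ∈ Nat.divisors (Nat.factorial (N + 1)), I d
        = (∑ d ∈ Nat.divisors (Nat.factorial (N + 1)), G μ d) - 1 := by
      have e1 : ∑ d ∈ (Nat.divisors (Nat.factorial (N + 1))).erase 1, I d
          = ∑ d ∈ (Nat.divisors (Nat.factorial (N + 1))).erase 1, G μ d := by
        apply Finset.sum_congr rfl
        intro d hd
        have hd1 : d ≠ 1 := (Finset.mem_erase.mp hd).1
        have hdm : d ∈ Nat.divisors (Nat.factorial (N + 1)) := (Finset.mem_erase.mp hd).2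
        have : 0 < d := Nat.pos_of_mem_divisors hdm
        exact hIG d (by omega)
      have e2 : ∑ d ∈ Nat.divisors (Nat.factorial (N + 1)), I d
          = ∑ d ∈ (Nat.divisors (Nat.factorial (N + 1))).erase 1, I d := by
        rw [← Finset.add_sum_erase _ I h1mem, hI0 1 (by omega), zero_add]
      have e3 : ∑ d ∈ (Nat.divisors (Nat.factorial (N + 1))).erase 1, G μ d
          = (∑ d ∈ Nat.divisors (Nat.factorial (N + 1)), G μ d) - G μ 1 :=
        Finset.sum_erase_eq_sub h1mem
      rw [e2, e1, e3, G_one]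
    rw [hsplit]
    have := sum_divisors_G_bounds μ hμ1 hMne
    linarith [this.2]
  refine ⟨?_, ?_, ?_⟩
  · show Summable (fun d : {d : ℕ // 1 < d} => |g0 (d : ℕ)|)
    have hsub := hsumabs.subtype {d : ℕ | 1 < d}
    apply Summable.congr hsub
    intro d
    show |I d.1| = |g0 d.1|
    rw [hIg0 d.1 d.2]
  · show 0 ≤ -∑' d : {d : ℕ // 1 < d}, g0 (d : ℕ)
    rw [heq]
    linarith
  · show -∑' d : {d : ℕ // 1 < d}, g0 (d : ℕ) ≤ 2 ^ 28 / (tet m : ℝ)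
    rw [heq]
    have habs : |∑' d : ℕ, I d| ≤ ∑' d, |I d| := by
      calc |∑' d : ℕ, I d| = ‖∑' d : ℕ, I d‖ := (Real.norm_eq_abs _).symm
        _ ≤ ∑' d, ‖I d‖ := norm_tsum_le_tsum_norm (by
            simpa only [Real.norm_eq_abs] using hsumabs)
        _ = ∑' d, |I d| := by simp [Real.norm_eq_abs]
    have h1 : -∑' d : ℕ, I d ≤ |∑' d : ℕ, I d| := neg_le_abs _
    have hcast : ((tet m : ℕ) : ℝ) = 2 ^ T := by
      rw [htetm]
      push_cast
      ring
    have hfinal : (2:ℝ) ^ 14 / 2 ^ T ≤ 2 ^ 28 / (tet m : ℝ) := by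
      rw [hcast]
      gcongr
      · norm_num
      · norm_num
    linarith
end

section
/- The series ∑_{k≥1} ((2↑↑k)·𝓓_k − 1/2) converges absolutely, where 𝓓_k is the natural density of {n : H(n) = k}. -/
lemma H_def (n : ℕ) : H n = if n ≤ 1 then 0
    else 1 + (n.primeFactors.sup fun p => H (n.factorization p)) := by
  rw [H]
  rcases le_or_gt n 1 with h | h
  · simp [h]
  · rw [dif_neg (by omega), if_neg (by omega)]
    exact congrArg _ (Finset.sup_attach n.primeFactors fun p => H (n.factorization p))

lemma tet_pos (m : ℕ) : 1 ≤ tet m := by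
  cases m with
  | zero => simp [tet]
  | succ m => exact Nat.one_le_two_pow

lemma lt_tet (m : ℕ) : m < tet m := by
  induction m with
  | zero => simp [tet]
  | succ m ih => calc m + 1 ≤ tet m := ih
                  _ < 2 ^ tet m := Nat.lt_two_pow_self
                  _ = tet (m+1) := rfl

lemma H_pow_two (a : ℕ) (ha : 1 ≤ a) : H (2^a) = 1 + H a := by
  rw [H_def]
  have h2 : ¬ (2^a ≤ 1) := by
    have : 2^1 ≤ 2^a := Nat.pow_le_pow_right (by norm_num) ha
    omega
  rw [if_neg h2]
  have hpf : (2^a).primeFactors = {2} := by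
    rw [Nat.primeFactors_prime_pow (by omega) Nat.prime_two]
  have hfac : (2^a).factorization 2 = a := by
    simp [Nat.Prime.factorization_pow, Nat.prime_two.factorization]
  rw [hpf, Finset.sup_singleton, hfac]

lemma H_tet (m : ℕ) : H (tet m) = m := by
  induction m with
  | zero => rw [show tet 0 = 1 from rfl, H_def]; simp
  | succ m ih => rw [show tet (m+1) = 2 ^ tet m from rfl, H_pow_two _ (tet_pos m), ih]; omega

lemma tet_le_of_le_H : ∀ n, 1 ≤ n → ∀ m, m ≤ H n → tet m ≤ n := by
  intro n
  induction n using Nat.strong_induction_on with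
  | _ n ih =>
    intro hn m hm
    match m with
    | 0 => simpa [tet] using hn
    | m + 1 =>
      have hn2 : 2 ≤ n := by
        by_contra h
        interval_cases n <;> simp_all [H_def]
      have hne : n.primeFactors.Nonempty := Nat.nonempty_primeFactors.2 hn2
      obtain ⟨p, hp, hsup⟩ := Finset.exists_mem_eq_sup n.primeFactors hne
        (fun p => H (n.factorization p))
      have hHn : H n = 1 + H (n.factorization p) := by
        rw [H_def, if_neg (by omega), hsup]
      have hpp := (Nat.mem_primeFactors.1 hp)
      have hfp1 : 1 ≤ n.factorization p :=
        Nat.Prime.factorization_pos_of_dvd hpp.1 (by omega) hpp.2.1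
      have hflt : n.factorization p < n := Nat.factorization_lt p (by omega)
      have htm : tet m ≤ n.factorization p := ih _ hflt hfp1 m (by omega)
      calc tet (m+1) = 2 ^ tet m := rfl
        _ ≤ p ^ tet m := Nat.pow_le_pow_left hpp.1.two_le _
        _ ≤ p ^ n.factorization p :=
            Nat.pow_le_pow_right (by have := hpp.1.two_le; omega) htm
        _ ≤ n := Nat.ordProj_le p (by omega)

lemma H_lt_of_lt_tet {n m : ℕ} (hm : 1 ≤ m) (h : n < tet m) : H n < m := by
  by_contra hc
  push_neg at hc
  rcases Nat.eq_zero_or_pos n with rfl | hn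
  · have h0 : H 0 = 0 := by rw [H_def]; simp
    have := tet_pos m
    omega
  · exact absurd (tet_le_of_le_H n hn m hc) (Nat.not_le.2 h)

lemma H_succ_sup {n : ℕ} (hn : 2 ≤ n) :
    ∃ p ∈ n.primeFactors, p.Prime ∧ p ∣ n ∧ H n = 1 + H (n.factorization p) := by
  have hne : n.primeFactors.Nonempty := Nat.nonempty_primeFactors.2 hn
  obtain ⟨p, hp, hsup⟩ := Finset.exists_mem_eq_sup n.primeFactors hne
    (fun p => H (n.factorization p))
  have hpp := Nat.mem_primeFactors.1 hp
  exact ⟨p, hp, hpp.1, hpp.2.1, by rw [H_def, if_neg (by omega), hsup]⟩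

lemma factorization_ge_one {n p : ℕ} (hp : p ∈ n.primeFactors) : 1 ≤ n.factorization p := by
  have h := Nat.mem_primeFactors.1 hp
  exact Nat.Prime.factorization_pos_of_dvd h.1 h.2.2 h.2.1

lemma H_eq_of_v2 {k n : ℕ} (hk : 1 ≤ k) (hv : n.factorization 2 = tet (k-1))
    (hall : ∀ p ∈ n.primeFactors, n.factorization p < tet k) : H n = k := by
  have ht1 : 1 ≤ tet (k-1) := tet_pos _
  have hn0 : n ≠ 0 := by rintro rfl; simp at hv; omega
  have h2d : 2 ∣ n := Nat.dvd_of_factorization_pos (by omega)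
  have h2m : 2 ∈ n.primeFactors := Nat.mem_primeFactors.2 ⟨Nat.prime_two, h2d, hn0⟩
  have hn2 : 2 ≤ n := Nat.le_of_dvd (by omega) h2d
  rw [H_def, if_neg (by omega)]
  have hsup : (n.primeFactors.sup fun p => H (n.factorization p)) = k - 1 := by
    apply le_antisymm
    · apply Finset.sup_le
      intro p hp
      have := H_lt_of_lt_tet hk (hall p hp)
      omega
    · simpa [hv, H_tet] using Finset.le_sup (f := fun p => H (n.factorization p)) h2m
  omega

lemma two_pow_succ_le_three_pow : ∀ s, 3 ≤ s → 2^(s+1) ≤ 3^s := by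
  intro s hs
  induction s, hs using Nat.le_induction with
  | base => norm_num
  | succ m hm ih =>
    calc 2^(m+1+1) = 2 * 2^(m+1) := by ring
      _ ≤ 3 * 3^m := by omega
      _ = 3^(m+1) := by ring

lemma upper_mem {k n : ℕ} (hk : 4 ≤ k) (hn : 1 ≤ n) (hH : H n = k) :
    n.factorization 2 = tet (k-1) ∨ (2^(2 * tet (k-1)) ∣ n) ∨
      ∃ m, 3 ≤ m ∧ m ≤ n ∧ m ^ tet (k-1) ∣ n := by
  set t := tet (k-1) with hts
  have hn2 : 2 ≤ n := by
    by_contra h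
    have : n = 1 := by omega
    rw [this, H_def] at hH
    simp at hH; omega
  obtain ⟨p, hpm, hpp, hpd, hrec⟩ := H_succ_sup hn2
  have hHp : H (n.factorization p) = k - 1 := by omega
  have hvt : t ≤ n.factorization p :=
    tet_le_of_le_H _ (factorization_ge_one hpm) _ (by omega)
  rcases eq_or_ne p 2 with rfl | hpne
  · set α := n.factorization 2 with hα
    rcases Nat.lt_or_ge α (2 * t) with hlt | hge
    · -- show α = t
      left
      have hα2 : 2 ≤ α := by
        have h1 : 1 ≤ H α := by omega
        have := tet_le_of_le_H α (by omega) 1 h1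
        simpa [tet] using this
      obtain ⟨q, hqm, hqp, hqd, hqrec⟩ := H_succ_sup hα2
      have hHq : H (α.factorization q) = k - 2 := by omega
      have hs : tet (k-2) ≤ α.factorization q :=
        tet_le_of_le_H _ (factorization_ge_one hqm) _ (by omega)
      set s := tet (k-2) with hss
      have hts2 : t = 2 ^ s := by
        rw [hts, hss]
        have h : k - 1 = (k-2) + 1 := by omega
        rw [h]
        rfl
      rcases eq_or_ne q 2 with rfl | hqne
      · -- 2^s ∣ α, so t ∣ α
        have h2sd : (2:ℕ)^s ∣ α := dvd_trans (pow_dvd_pow 2 hs) (Nat.ordProj_dvd α 2)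
        have htd : t ∣ α := by rw [hts2]; exact h2sd
        obtain ⟨c, hc⟩ := htd
        have ht1 : 1 ≤ t := tet_pos _
        have hc1 : c = 1 := by
          by_contra hcne
          rcases Nat.lt_or_ge c 1 with h | h
          · have hc0 : c = 0 := by omega
            rw [hc0, Nat.mul_zero] at hc
            omega
          · have h2 : 2 ≤ c := by omega
            have : 2 * t ≤ t * c := by
              calc 2 * t = t * 2 := by ring
                _ ≤ t * c := Nat.mul_le_mul_left t h2
            omega
        rw [hc, hc1, Nat.mul_one]
      · -- q ≥ 3 : contradiction
        exfalso
        have hq3 : 3 ≤ q := by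
          have := hqp.two_le
          omega
        have h3s : 3^s ≤ α := by
          calc (3:ℕ)^s ≤ q^s := Nat.pow_le_pow_left hq3 _
            _ ≤ q ^ α.factorization q := Nat.pow_le_pow_right (by omega) hs
            _ ≤ α := Nat.ordProj_le q (by omega)
        have hs3 : 3 ≤ s := by
          have h1 := lt_tet (k-2)
          omega
        have := two_pow_succ_le_three_pow s hs3
        have h2t : 2 * t = 2^(s+1) := by rw [hts2]; ring
        omega
    · right; left
      exact dvd_trans (pow_dvd_pow 2 hge) (Nat.ordProj_dvd n 2)
  · right; right
    refine ⟨p, ?_, Nat.le_of_dvd (by omega) hpd, dvd_trans (pow_dvd_pow p hvt) (Nat.ordProj_dvd n p)⟩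
    have := hpp.two_le
    omega

open Finset

lemma card_dvd_filter (x d : ℕ) :
    ((Finset.Icc 1 x).filter (fun n => d ∣ n)).card = x / d := by
  rw [show Finset.Icc 1 x = Finset.Ioc 0 x by ext; simp; omega]
  exact Nat.Ioc_filter_dvd_card_eq_div x d

lemma filter_v2_eq (x t : ℕ) :
    (Finset.Icc 1 x).filter (fun n => n.factorization 2 = t) =
      ((Finset.Icc 1 x).filter (fun n => 2^t ∣ n)) \
        ((Finset.Icc 1 x).filter (fun n => 2^(t+1) ∣ n)) := by
  ext n
  simp only [Finset.mem_sdiff, Finset.mem_filter, Finset.mem_Icc]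
  constructor
  · rintro ⟨⟨h1, h2⟩, hv⟩
    have hn0 : n ≠ 0 := by omega
    refine ⟨⟨⟨h1, h2⟩, ?_⟩, fun h => ?_⟩
    · exact (Nat.Prime.pow_dvd_iff_le_factorization Nat.prime_two hn0).2 (by omega)
    · have := (Nat.Prime.pow_dvd_iff_le_factorization Nat.prime_two hn0).1 h.2
      omega
  · rintro ⟨⟨⟨h1, h2⟩, hd⟩, hnd⟩
    have hn0 : n ≠ 0 := by omega
    refine ⟨⟨h1, h2⟩, ?_⟩
    have ha := (Nat.Prime.pow_dvd_iff_le_factorization Nat.prime_two hn0).1 hd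
    have hb : ¬ (t + 1 ≤ n.factorization 2) := fun h => hnd ⟨⟨h1, h2⟩,
      (Nat.Prime.pow_dvd_iff_le_factorization Nat.prime_two hn0).2 h⟩
    omega

lemma card_v2_eq (x t : ℕ) :
    (((Finset.Icc 1 x).filter (fun n => n.factorization 2 = t)).card : ℤ) =
      (x / 2^t : ℕ) - (x / 2^(t+1) : ℕ) := by
  rw [filter_v2_eq]
  have hsub : (Finset.Icc 1 x).filter (fun n => 2^(t+1) ∣ n) ⊆
      (Finset.Icc 1 x).filter (fun n => 2^t ∣ n) := by
    intro a ha
    simp only [Finset.mem_filter] at ha ⊢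
    exact ⟨ha.1, dvd_trans (pow_dvd_pow 2 (Nat.le_succ t)) ha.2⟩
  rw [Finset.card_sdiff_of_subset hsub, card_dvd_filter, card_dvd_filter]
  have hle : x / 2^(t+1) ≤ x / 2^t :=
    Nat.div_le_div_left (Nat.pow_le_pow_right (by norm_num) (Nat.le_succ t)) (Nat.pow_pos (by norm_num))
  omega

lemma cast_div_ge (x d : ℕ) (hd : 0 < d) : (x:ℝ)/d - 1 ≤ ((x/d : ℕ):ℝ) := by
  have h : (d:ℝ) * ((x/d : ℕ):ℝ) + ((x % d : ℕ):ℝ) = (x:ℝ) := by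
    exact_mod_cast Nat.div_add_mod x d
  have hr1 : ((x % d : ℕ):ℝ) < d := by exact_mod_cast Nat.mod_lt x hd
  have hd' : (0:ℝ) < d := by exact_mod_cast hd
  rw [sub_le_iff_le_add, div_le_iff₀ hd']
  nlinarith

lemma sum_inv_sq_aux : ∀ M : ℕ, 2 ≤ M → (∑ m ∈ Finset.Icc 3 M, (1/((m:ℝ))^2)) ≤ 1/2 - 1/(M:ℝ) := by
  intro M hM
  induction M, hM using Nat.le_induction with
  | base => norm_num
  | succ M hM ih =>
    rw [Finset.sum_Icc_succ_top (by omega)]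
    have h1 : (0:ℝ) < M := by exact_mod_cast Nat.lt_of_lt_of_le (by norm_num) hM
    have key : (1:ℝ)/((M:ℝ)+1)^2 ≤ 1/(M:ℝ) - 1/((M:ℝ)+1) := by
      rw [div_sub_div _ _ (ne_of_gt h1) (by positivity)]
      rw [div_le_div_iff₀ (by positivity) (by positivity)]
      nlinarith
    push_cast
    linarith

lemma sum_inv_sq (M : ℕ) : (∑ m ∈ Finset.Icc 3 M, (1/((m:ℝ))^2)) ≤ 1/2 := by
  rcases Nat.lt_or_ge M 2 with h | h
  · rw [Finset.Icc_eq_empty (by omega)]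
    norm_num
  · have h2 : (0:ℝ) < M := by exact_mod_cast Nat.lt_of_lt_of_le (by norm_num) h
    have h3 : (0:ℝ) ≤ 1/(M:ℝ) := by positivity
    linarith [sum_inv_sq_aux M h]

lemma sum_div_pow_le (x M t : ℕ) (ht : 2 ≤ t) :
    ∑ m ∈ Finset.Icc 3 M, ((x / m^t : ℕ):ℝ) ≤ (x:ℝ) * ((9/2)/3^t) := by
  have step1 : ∀ m ∈ Finset.Icc 3 M, ((x / m^t : ℕ):ℝ) ≤ (x:ℝ) * (9/3^t) * (1/(m:ℝ)^2) := by
    intro m hm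
    have hm3 : 3 ≤ m := (Finset.mem_Icc.1 hm).1
    have hm3' : (3:ℝ) ≤ (m:ℝ) := by exact_mod_cast hm3
    have hcast : ((x / m^t : ℕ):ℝ) ≤ (x:ℝ) / ((m:ℝ))^t := by
      have := Nat.cast_div_le (α := ℝ) (m := x) (n := m^t)
      push_cast at this
      exact this
    refine hcast.trans ?_
    have hnat : 3^t * m^2 ≤ 9 * m^t := by
      have h9 : (3:ℕ)^t = 9 * 3^(t-2) := by
        rw [show t = 2 + (t - 2) by omega, pow_add]
        norm_num
      have hm' : 3^(t-2) * m^2 ≤ m^(t-2) * m^2 :=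
        Nat.mul_le_mul_right _ (Nat.pow_le_pow_left hm3 _)
      calc 3^t * m^2 = 9 * (3^(t-2) * m^2) := by rw [h9]; ring
        _ ≤ 9 * (m^(t-2) * m^2) := Nat.mul_le_mul_left _ hm'
        _ = 9 * m^t := by rw [← pow_add, show t - 2 + 2 = t by omega]
    have hnat' : ((3:ℝ))^t * (m:ℝ)^2 ≤ 9 * (m:ℝ)^t := by exact_mod_cast hnat
    have hx0 : (0:ℝ) ≤ x := Nat.cast_nonneg x
    rw [div_le_iff₀ (by positivity : (0:ℝ) < ((m:ℝ))^t)]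
    have expand : (x:ℝ)*(9/3^t)*(1/(m:ℝ)^2)*(m:ℝ)^t = (x:ℝ) * (9*(m:ℝ)^t) / (3^t*(m:ℝ)^2) := by
      field_simp
    rw [expand, le_div_iff₀ (by positivity)]
    nlinarith
  calc ∑ m ∈ Finset.Icc 3 M, ((x / m^t : ℕ):ℝ)
      ≤ ∑ m ∈ Finset.Icc 3 M, (x:ℝ) * (9/3^t) * (1/(m:ℝ)^2) := Finset.sum_le_sum step1
    _ = (x:ℝ) * (9/3^t) * ∑ m ∈ Finset.Icc 3 M, (1/(m:ℝ)^2) := by rw [Finset.mul_sum]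
    _ ≤ (x:ℝ) * (9/3^t) * (1/2) :=
        mul_le_mul_of_nonneg_left (sum_inv_sq M) (by positivity)
    _ = (x:ℝ) * ((9/2)/3^t) := by ring

lemma count_upper {k x : ℕ} (hk : 4 ≤ k) (hx : 1 ≤ x) :
    (((Finset.Icc 1 x).filter fun n => H n = k).card : ℝ) ≤
      (x:ℝ) * (1/(2*2^(tet (k-1))) + 1/2^(2*(tet (k-1))) + (9/2)/3^(tet (k-1))) + 1 := by
  set t := tet (k-1) with hts
  set s := Finset.Icc 1 x with hss
  set F1 := s.filter (fun n => n.factorization 2 = t) with hF1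
  set F2 := s.filter (fun n => 2^(2*t) ∣ n) with hF2
  set F3 := (Finset.Icc 3 x).biUnion (fun m => s.filter (fun n => m^t ∣ n)) with hF3
  have hsub : s.filter (fun n => H n = k) ⊆ (F1 ∪ F2) ∪ F3 := by
    intro n hn
    rw [Finset.mem_filter, hss, Finset.mem_Icc] at hn
    rcases upper_mem hk hn.1.1 hn.2 with h | h | ⟨m, hm3, hmn, hmd⟩
    · apply Finset.mem_union_left
      apply Finset.mem_union_left
      rw [hF1, Finset.mem_filter, hss, Finset.mem_Icc]
      exact ⟨hn.1, h⟩
    · apply Finset.mem_union_left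
      apply Finset.mem_union_right
      rw [hF2, Finset.mem_filter, hss, Finset.mem_Icc]
      exact ⟨hn.1, h⟩
    · apply Finset.mem_union_right
      rw [hF3, Finset.mem_biUnion]
      exact ⟨m, Finset.mem_Icc.2 ⟨hm3, le_trans hmn hn.1.2⟩,
        Finset.mem_filter.2 ⟨(by rw [hss, Finset.mem_Icc]; exact hn.1), hmd⟩⟩
  have hcard : (s.filter (fun n => H n = k)).card ≤ F1.card + F2.card + F3.card := by
    calc (s.filter (fun n => H n = k)).card ≤ ((F1 ∪ F2) ∪ F3).card := Finset.card_le_card hsub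
      _ ≤ (F1 ∪ F2).card + F3.card := Finset.card_union_le _ _
      _ ≤ F1.card + F2.card + F3.card := by
          have := Finset.card_union_le F1 F2
          omega
  -- real bounds
  have ht2 : 2 ≤ t := by
    have := lt_tet (k-1)
    omega
  have hF1r : (F1.card : ℝ) ≤ (x:ℝ) * (1/(2*2^t)) + 1 := by
    have hz := card_v2_eq x t
    have hzr : (F1.card : ℝ) = ((x / 2^t : ℕ):ℝ) - ((x / 2^(t+1) : ℕ):ℝ) := by
      exact_mod_cast hz
    have ha : ((x / 2^t : ℕ):ℝ) ≤ (x:ℝ)/2^t := by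
      have := Nat.cast_div_le (α := ℝ) (m := x) (n := 2^t)
      push_cast at this; exact this
    have hb : (x:ℝ)/2^(t+1) - 1 ≤ ((x / 2^(t+1) : ℕ):ℝ) := by
      have := cast_div_ge x (2^(t+1)) (Nat.pow_pos (by norm_num))
      push_cast at this; exact this
    have : (x:ℝ)/2^t - ((x:ℝ)/2^(t+1) - 1) = (x:ℝ) * (1/(2*2^t)) + 1 := by
      rw [pow_succ]
      ring
    linarith
  have hF2r : (F2.card : ℝ) ≤ (x:ℝ) * (1/2^(2*t)) := by
    have : F2.card = x / 2^(2*t) := by rw [hF2, hss]; exact card_dvd_filter x _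
    rw [this]
    have := Nat.cast_div_le (α := ℝ) (m := x) (n := 2^(2*t))
    push_cast at this
    rw [mul_one_div]
    exact this
  have hF3r : (F3.card : ℝ) ≤ (x:ℝ) * ((9/2)/3^t) := by
    have h1 : F3.card ≤ ∑ m ∈ Finset.Icc 3 x, (x / m^t) := by
      rw [hF3]
      apply le_trans (Finset.card_biUnion_le)
      apply Finset.sum_le_sum
      intro m hm
      rw [hss, card_dvd_filter]
    calc (F3.card : ℝ) ≤ ((∑ m ∈ Finset.Icc 3 x, (x / m^t) : ℕ) : ℝ) := by exact_mod_cast h1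
      _ = ∑ m ∈ Finset.Icc 3 x, ((x / m^t : ℕ):ℝ) := by push_cast; rfl
      _ ≤ (x:ℝ) * ((9/2)/3^t) := sum_div_pow_le x x t ht2
  have : ((s.filter (fun n => H n = k)).card : ℝ) ≤ (F1.card : ℝ) + F2.card + F3.card := by
    exact_mod_cast hcard
  calc ((s.filter (fun n => H n = k)).card : ℝ) ≤ (F1.card : ℝ) + F2.card + F3.card := this
    _ ≤ ((x:ℝ) * (1/(2*2^t)) + 1) + (x:ℝ) * (1/2^(2*t)) + (x:ℝ) * ((9/2)/3^t) := by
        linarith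
    _ = (x:ℝ) * (1/(2*2^t) + 1/2^(2*t) + (9/2)/3^t) + 1 := by ring

lemma count_lower {k x : ℕ} (hk : 4 ≤ k) (hx : 1 ≤ x) :
    (x:ℝ) * (1/(2*2^(tet (k-1))) - (9/2)/3^(tet k)) - 1 ≤
      (((Finset.Icc 1 x).filter fun n => H n = k).card : ℝ) := by
  set t := tet (k-1) with hts
  set s := Finset.Icc 1 x with hss
  set F1 := s.filter (fun n => n.factorization 2 = t) with hF1
  set B := (Finset.Icc 3 x).biUnion (fun m => s.filter (fun n => m^(tet k) ∣ n)) with hB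
  have htetk : tet k = 2^t := by
    rw [hts]
    conv_lhs => rw [show k = (k-1)+1 by omega]
    rfl
  have hsub : F1 \ B ⊆ s.filter (fun n => H n = k) := by
    intro n hn
    rw [Finset.mem_sdiff, hF1, Finset.mem_filter] at hn
    obtain ⟨⟨hns, hv⟩, hnB⟩ := hn
    rw [Finset.mem_filter]
    refine ⟨hns, ?_⟩
    have hn1 : 1 ≤ n := by rw [hss, Finset.mem_Icc] at hns; exact hns.1
    have hnx : n ≤ x := by rw [hss, Finset.mem_Icc] at hns; exact hns.2
    apply H_eq_of_v2 (by omega) hv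
    intro p hp
    have hpp := Nat.mem_primeFactors.1 hp
    rcases eq_or_ne p 2 with rfl | hne
    · rw [hv, htetk]
      exact Nat.lt_two_pow_self
    · by_contra hge
      push_neg at hge
      apply hnB
      rw [hB, Finset.mem_biUnion]
      have hp3 : 3 ≤ p := by have := hpp.1.two_le; omega
      have hpn : p ≤ n := Nat.le_of_dvd (by omega) hpp.2.1
      refine ⟨p, Finset.mem_Icc.2 ⟨hp3, le_trans hpn hnx⟩, Finset.mem_filter.2 ⟨hns, ?_⟩⟩
      exact dvd_trans (pow_dvd_pow p hge) (Nat.ordProj_dvd n p)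
  have hcard : F1.card ≤ (s.filter (fun n => H n = k)).card + B.card := by
    calc F1.card ≤ (F1 \ B).card + B.card := Finset.card_le_card_sdiff_add_card
      _ ≤ (s.filter (fun n => H n = k)).card + B.card := by
          have := Finset.card_le_card hsub
          omega
  have ht2 : 2 ≤ tet k := by
    have := lt_tet k
    omega
  have hBr : (B.card : ℝ) ≤ (x:ℝ) * ((9/2)/3^(tet k)) := by
    have h1 : B.card ≤ ∑ m ∈ Finset.Icc 3 x, (x / m^(tet k)) := by
      rw [hB]
      apply le_trans (Finset.card_biUnion_le)
      apply Finset.sum_le_sum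
      intro m hm
      rw [hss, card_dvd_filter]
    calc (B.card : ℝ) ≤ ((∑ m ∈ Finset.Icc 3 x, (x / m^(tet k)) : ℕ) : ℝ) := by exact_mod_cast h1
      _ = ∑ m ∈ Finset.Icc 3 x, ((x / m^(tet k) : ℕ):ℝ) := by push_cast; rfl
      _ ≤ (x:ℝ) * ((9/2)/3^(tet k)) := sum_div_pow_le x x _ ht2
  have hF1r : (x:ℝ) * (1/(2*2^t)) - 1 ≤ (F1.card : ℝ) := by
    have hz := card_v2_eq x t
    have hzr : (F1.card : ℝ) = ((x / 2^t : ℕ):ℝ) - ((x / 2^(t+1) : ℕ):ℝ) := by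
      exact_mod_cast hz
    have ha : (x:ℝ)/2^t - 1 ≤ ((x / 2^t : ℕ):ℝ) := by
      have := cast_div_ge x (2^t) (Nat.pow_pos (by norm_num))
      push_cast at this; exact this
    have hb : ((x / 2^(t+1) : ℕ):ℝ) ≤ (x:ℝ)/2^(t+1) := by
      have := Nat.cast_div_le (α := ℝ) (m := x) (n := 2^(t+1))
      push_cast at this; exact this
    have : ((x:ℝ)/2^t - 1) - (x:ℝ)/2^(t+1) = (x:ℝ) * (1/(2*2^t)) - 1 := by
      rw [pow_succ]
      ring
    linarith
  have hfin : ((s.filter (fun n => H n = k)).card : ℝ) ≥ (F1.card : ℝ) - B.card := by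
    have : (F1.card : ℝ) ≤ ((s.filter (fun n => H n = k)).card : ℝ) + B.card := by
      exact_mod_cast hcard
    linarith
  linarith

lemma D_bounds (D : ℕ → ℝ) (k : ℕ) (hk : 4 ≤ k)
    (hDk : Filter.Tendsto
        (fun x : ℕ => (((Finset.Icc 1 x).filter fun n => H n = k).card : ℝ) / x)
        Filter.atTop (nhds (D k))) :
    1/(2*2^(tet (k-1))) - (9/2)/3^(tet k) ≤ D k ∧
      D k ≤ 1/(2*2^(tet (k-1))) + 1/2^(2*(tet (k-1))) + (9/2)/3^(tet (k-1)) := by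
  set t := tet (k-1) with hts
  set U : ℝ := 1/(2*2^t) + 1/2^(2*t) + (9/2)/3^t with hU
  set L : ℝ := 1/(2*2^t) - (9/2)/3^(tet k) with hL
  constructor
  · have h2 : Filter.Tendsto (fun x : ℕ => L - 1/(x:ℝ)) Filter.atTop (nhds (L - 0)) :=
      tendsto_const_nhds.sub tendsto_one_div_atTop_nhds_zero_nat
    rw [sub_zero] at h2
    refine le_of_tendsto_of_tendsto h2 hDk ?_
    filter_upwards [Filter.eventually_ge_atTop 1] with x hx
    have hcl := count_lower (x := x) hk hx
    have hx0 : (0:ℝ) < x := by exact_mod_cast hx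
    have hstep : L * x - 1 ≤ (((Finset.Icc 1 x).filter fun n => H n = k).card : ℝ) := by
      calc L * x - 1 = (x:ℝ) * (1/(2*2^(tet (k-1))) - (9/2)/3^(tet k)) - 1 := by
            rw [hL, ← hts]; ring
        _ ≤ _ := hcl
    rw [show L - 1/(x:ℝ) = (L*(x:ℝ) - 1)/x by field_simp]
    exact (div_le_div_iff_of_pos_right hx0).2 hstep
  · have h2 : Filter.Tendsto (fun x : ℕ => U + 1/(x:ℝ)) Filter.atTop (nhds (U + 0)) :=
      tendsto_const_nhds.add tendsto_one_div_atTop_nhds_zero_nat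
    rw [add_zero] at h2
    refine le_of_tendsto_of_tendsto hDk h2 ?_
    filter_upwards [Filter.eventually_ge_atTop 1] with x hx
    have hcu := count_upper (x := x) hk hx
    have hx0 : (0:ℝ) < x := by exact_mod_cast hx
    rw [div_le_iff₀ hx0]
    calc (((Finset.Icc 1 x).filter fun n => H n = k).card : ℝ)
        ≤ (x:ℝ) * U + 1 := hcu
      _ = (U + 1/(x:ℝ)) * x := by field_simp

lemma main_est (D : ℕ → ℝ) (k : ℕ) (hk : 4 ≤ k)
    (hDk : Filter.Tendsto
        (fun x : ℕ => (((Finset.Icc 1 x).filter fun n => H n = k).card : ℝ) / x)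
        Filter.atTop (nhds (D k))) :
    |(tet k : ℝ) * D k - 1/2| ≤ 6 * (2/3:ℝ)^(tet (k-1)) := by
  obtain ⟨hlo, hhi⟩ := D_bounds D k hk hDk
  set t := tet (k-1) with hts
  have htetk : tet k = 2^t := by
    rw [hts]
    conv_lhs => rw [show k = (k-1)+1 by omega]
    rfl
  have hcast : ((tet k : ℕ) : ℝ) = (2:ℝ)^t := by
    rw [htetk]; push_cast; ring
  have hT0 : (0:ℝ) < (2:ℝ)^t := by positivity
  have he0 : (0:ℝ) < (2/3:ℝ)^t := by positivity
  have f1 : (2:ℝ)^t * (1/(2*2^t)) = 1/2 := by first | (field_simp; ring) | field_simp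
  have f2 : (2:ℝ)^t * (1/2^(2*t)) ≤ (2/3:ℝ)^t := by
    have : (2:ℝ)^(2*t) = 2^t * 2^t := by rw [two_mul, pow_add]
    rw [this]
    rw [show (2:ℝ)^t * (1/(2^t * 2^t)) = 1/2^t by field_simp]
    rw [show (1:ℝ)/2^t = (1/2:ℝ)^t by rw [div_pow]; norm_num]
    exact pow_le_pow_left₀ (by norm_num) (by norm_num) t
  have f3 : (2:ℝ)^t * ((9/2)/3^t) = (9/2) * (2/3:ℝ)^t := by
    rw [div_pow]
    field_simp
  have f5 : (2:ℝ)^t * ((9/2)/3^(tet k)) ≤ (9/2) * (2/3:ℝ)^t := by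
    rw [← f3]
    apply mul_le_mul_of_nonneg_left _ (le_of_lt hT0)
    apply div_le_div_of_nonneg_left (by norm_num) (by positivity)
    apply pow_le_pow_right₀ (by norm_num)
    rw [htetk]
    exact le_of_lt (Nat.lt_two_pow_self)
  have hDub : (tet k : ℝ) * D k - 1/2 ≤ 6 * (2/3:ℝ)^t := by
    rw [hcast]
    have step : (2:ℝ)^t * D k ≤ (2:ℝ)^t * (1/(2*2^t) + 1/2^(2*t) + (9/2)/3^t) :=
      mul_le_mul_of_nonneg_left hhi (le_of_lt hT0)
    rw [mul_add, mul_add, f1] at step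
    linarith
  have hDlb : -(6 * (2/3:ℝ)^t) ≤ (tet k : ℝ) * D k - 1/2 := by
    rw [hcast]
    have step : (2:ℝ)^t * (1/(2*2^t) - (9/2)/3^(tet k)) ≤ (2:ℝ)^t * D k :=
      mul_le_mul_of_nonneg_left hlo (le_of_lt hT0)
    rw [mul_sub, f1] at step
    linarith
  exact abs_le.2 ⟨hDlb, hDub⟩


theorem stmt17 (D : ℕ → ℝ)
    (hD : ∀ k : ℕ,
      Filter.Tendsto
        (fun x : ℕ => (((Finset.Icc 1 x).filter fun n => H n = k).card : ℝ) / x)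
        Filter.atTop (nhds (D k))) :
    Summable (fun k : ℕ => |(tet (k + 1) : ℝ) * D (k + 1) - 1 / 2|) := by
  apply Summable.of_norm_bounded_eventually (g := fun k : ℕ => 6 * (2/3:ℝ)^k)
  · exact (summable_geometric_of_lt_one (by norm_num) (by norm_num)).mul_left 6
  · rw [Filter.eventually_cofinite]
    apply Set.Finite.subset (Set.finite_Iio 3)
    intro k hk
    simp only [Set.mem_setOf_eq] at hk
    rw [Set.mem_Iio]
    by_contra hk3
    push_neg at hk3
    apply hk
    have h4 : 4 ≤ k + 1 := by omega
    have hest := main_est D (k+1) h4 (hD (k+1))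
    have hidx : k + 1 - 1 = k := by omega
    rw [hidx] at hest
    have h1 : (6:ℝ) * (2/3:ℝ)^(tet k) ≤ 6 * (2/3:ℝ)^k := by
      apply mul_le_mul_of_nonneg_left _ (by norm_num)
      exact pow_le_pow_of_le_one (by norm_num) (by norm_num) (le_of_lt (lt_tet k))
    have : ‖|(tet (k + 1) : ℝ) * D (k + 1) - 1 / 2|‖ = |(tet (k + 1) : ℝ) * D (k + 1) - 1 / 2| := by
      rw [Real.norm_eq_abs, abs_abs]
    rw [this]
    linarith
end
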